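/- Fix i,j ≥ 0. Assume that for every compact interval J ⊂ ℝ there is a Lebesgue-integrable function on (0,∞)×(0,∞) dominating, uniformly for t ∈ J, the entrywise norms of (x+y)^{-1} x^{i+1} y^j e^{t(x+y)} W(x)W(y) and (x+y)^{-1} x^i y^{j+1} e^{t(x+y)} W(x)W(y), and that all m_{k,l}(t) and φ_k(t) are finite. Then t ↦ m_{i,j}(t) is differentiable on ℝ and ∂_t m_{i,j}(t) = m_{i+1,j}(t) + m_{i,j+1}(t) = φ_i(t)·φ_j(t). -/

import Mathlib

open Matrix MeasureTheory Set

noncomputable section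

/-- `M_p`: real `p × p` matrices. -/
abbrev Mp (p : ℕ) := Matrix (Fin p) (Fin p) ℝ

/-- Integrand of the matrix-valued Cauchy inner product:
`(x + y)⁻¹ F(x) W(x) W(y) G(y)`. -/
def ipKer {p : ℕ} (W F G : ℝ → Mp p) : ℝ × ℝ → Mp p :=
  fun z => (z.1 + z.2)⁻¹ • (F z.1 * W z.1 * W z.2 * G z.2)

/-- Entrywise (Bochner/Lebesgue) integrability of the inner-product integrand on
`(0,∞) × (0,∞)`. -/
def IpInt {p : ℕ} (W F G : ℝ → Mp p) : Prop :=
  ∀ a b : Fin p, IntegrableOn (fun z => ipKer W F G z a b) (Ioi (0 : ℝ) ×ˢ Ioi (0 : ℝ))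

/-- The matrix-valued inner product
`⟨F, G⟩ = ∫_{(0,∞)×(0,∞)} (x+y)⁻¹ F(x) W(x) W(y) G(y) dx dy` (entrywise Lebesgue integral). -/
def ip {p : ℕ} (W F G : ℝ → Mp p) : Mp p :=
  Matrix.of fun a b => ∫ z in Ioi (0 : ℝ) ×ˢ Ioi (0 : ℝ), ipKer W F G z a b

/-- The entrywise integral `∫₀^∞ F(x) dx` of a matrix-valued function. -/
def int1 {p : ℕ} (F : ℝ → Mp p) : Mp p :=
  Matrix.of fun a b => ∫ x in Ioi (0 : ℝ), F x a b

/-- The monomial `x ↦ x^i I`. -/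
def monoM (p i : ℕ) : ℝ → Mp p := fun x => x ^ i • (1 : Mp p)

/-- The moments `m_{i,j} = ⟨x^i I, y^j I⟩`. -/
def momI {p : ℕ} (W : ℝ → Mp p) (i j : ℕ) : Mp p := ip W (monoM p i) (monoM p j)

/-- The block moment matrix `M_n = (m_{i,j})_{0 ≤ i,j ≤ n−1}`, an `np × np` real matrix. -/
def blockMW {p : ℕ} (W : ℝ → Mp p) (n : ℕ) : Matrix (Fin n × Fin p) (Fin n × Fin p) ℝ :=
  Matrix.of fun a b => momI W a.1 b.1 a.2 b.2

/-- The row of moments `(m_{n,0}, …, m_{n,n−1})`, a `p × np` matrix. -/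
def rowmW {p : ℕ} (W : ℝ → Mp p) (n : ℕ) : Matrix (Fin p) (Fin n × Fin p) ℝ :=
  Matrix.of fun a b => momI W n b.1 a b.2

/-- `ξ_{n,i}`, defined by `(ξ_{n,0},…,ξ_{n,n−1}) = −(m_{n,0},…,m_{n,n−1}) M_n⁻¹`. -/
def xiW {p : ℕ} (W : ℝ → Mp p) (n : ℕ) (i : Fin n) : Mp p :=
  Matrix.of fun a b => ((-(rowmW W n)) * (blockMW W n)⁻¹) a (i, b)

/-- The monic matrix-valued Cauchy orthogonal polynomial
`P_n(x) = x^n I + Σ_{i=0}^{n−1} ξ_{n,i} x^i`, evaluated at `x`. -/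
def PW {p : ℕ} (W : ℝ → Mp p) (n : ℕ) (x : ℝ) : Mp p :=
  x ^ n • (1 : Mp p) + ∑ i : Fin n, x ^ (i : ℕ) • xiW W n i

/-- `P_nᵀ(y) = y^n I + Σ_{i=0}^{n−1} y^i ξ_{n,i}ᵀ`, evaluated at `y`. -/
def PTW {p : ℕ} (W : ℝ → Mp p) (n : ℕ) (y : ℝ) : Mp p :=
  y ^ n • (1 : Mp p) + ∑ i : Fin n, y ^ (i : ℕ) • (xiW W n i)ᵀ

/-- Evaluation of a matrix-coefficient polynomial `f ∈ M_p[x]` at a real `x`. -/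
def pev {p : ℕ} (f : Polynomial (Mp p)) (x : ℝ) : Mp p :=
  f.sum fun i a => x ^ i • a

/-- Evaluation at a real `x` of the matrix-coefficient polynomial whose coefficients are
the transposes of the coefficients of `f`. -/
def pevT {p : ℕ} (f : Polynomial (Mp p)) (x : ℝ) : Mp p :=
  f.sum fun i a => x ^ i • aᵀ

/-- The time-deformed moments
`m_{i,j}(t) = ∫_{(0,∞)×(0,∞)} (x+y)⁻¹ x^i y^j e^{t(x+y)} W(x)W(y) dx dy`. -/
def mT {p : ℕ} (W : ℝ → Mp p) (i j : ℕ) (t : ℝ) : Mp p :=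
  Matrix.of fun a b => ∫ z in Ioi (0 : ℝ) ×ˢ Ioi (0 : ℝ),
    ((z.1 + z.2)⁻¹ * z.1 ^ i * z.2 ^ j * Real.exp (t * (z.1 + z.2))) * (W z.1 * W z.2) a b

/-- `φ_i(t) = ∫₀^∞ x^i e^{tx} W(x) dx`. -/
def phiT {p : ℕ} (W : ℝ → Mp p) (i : ℕ) (t : ℝ) : Mp p :=
  Matrix.of fun a b => ∫ x in Ioi (0 : ℝ), (x ^ i * Real.exp (t * x)) * W x a b

/-- Fix `i, j ≥ 0`.  Assume that for every compact interval `[c,d] ⊂ ℝ` there is an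
integrable function on `(0,∞)×(0,∞)` dominating, uniformly for `t ∈ [c,d]`, the entrywise
norms of `(x+y)⁻¹ x^{i+1} y^j e^{t(x+y)} W(x)W(y)` and `(x+y)⁻¹ x^i y^{j+1} e^{t(x+y)} W(x)W(y)`,
and that all `m_{k,l}(t)` and `φ_k(t)` are finite.  Then `t ↦ m_{i,j}(t)` is differentiable
on `ℝ` and `∂_t m_{i,j}(t) = m_{i+1,j}(t) + m_{i,j+1}(t) = φ_i(t) φ_j(t)`. -/
theorem stmt2 {p : ℕ} (hp : 1 ≤ p) (W : ℝ → Mp p)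
    (hWmeas : ∀ a b, Measurable fun x => W x a b)
    (hWsupp : ∀ x : ℝ, x ∉ Ioi (0 : ℝ) → W x = 0)
    (hWsym : ∀ x, (W x)ᵀ = W x)
    (i j : ℕ)
    (hdom : ∀ c d : ℝ, ∃ bound : ℝ × ℝ → ℝ,
      IntegrableOn bound (Ioi (0 : ℝ) ×ˢ Ioi (0 : ℝ)) ∧
      ∀ t ∈ Icc c d, ∀ z ∈ Ioi (0 : ℝ) ×ˢ Ioi (0 : ℝ), ∀ a b : Fin p,
        |((z.1 + z.2)⁻¹ * z.1 ^ (i + 1) * z.2 ^ j * Real.exp (t * (z.1 + z.2)))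
            * (W z.1 * W z.2) a b| ≤ bound z ∧
        |((z.1 + z.2)⁻¹ * z.1 ^ i * z.2 ^ (j + 1) * Real.exp (t * (z.1 + z.2)))
            * (W z.1 * W z.2) a b| ≤ bound z)
    (hmfin : ∀ (k l : ℕ) (t : ℝ) (a b : Fin p),
      IntegrableOn (fun z : ℝ × ℝ =>
          ((z.1 + z.2)⁻¹ * z.1 ^ k * z.2 ^ l * Real.exp (t * (z.1 + z.2)))
            * (W z.1 * W z.2) a b)
        (Ioi (0 : ℝ) ×ˢ Ioi (0 : ℝ)))
    (hphifin : ∀ (k : ℕ) (t : ℝ) (a b : Fin p),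
      IntegrableOn (fun x => (x ^ k * Real.exp (t * x)) * W x a b) (Ioi (0 : ℝ))) :
    ∀ t : ℝ,
      (∀ a b : Fin p,
        HasDerivAt (fun s => mT W i j s a b) ((mT W (i + 1) j t + mT W i (j + 1) t) a b) t) ∧
      mT W (i + 1) j t + mT W i (j + 1) t = phiT W i t * phiT W j t := by
  intro t
  have hset : MeasurableSet (Ioi (0:ℝ) ×ˢ Ioi (0:ℝ)) :=
    measurableSet_Ioi.prod measurableSet_Ioi
  have hsplit : ∀ (s : ℝ) (z : ℝ × ℝ) (a b : Fin p),
      ((z.1 + z.2)⁻¹ * z.1 ^ (i + 1) * z.2 ^ j * Real.exp (s * (z.1 + z.2)))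
          * (W z.1 * W z.2) a b
        + ((z.1 + z.2)⁻¹ * z.1 ^ i * z.2 ^ (j + 1) * Real.exp (s * (z.1 + z.2)))
          * (W z.1 * W z.2) a b
      = ((z.1 + z.2)⁻¹ * z.1 ^ i * z.2 ^ j * Real.exp (s * (z.1 + z.2)) * (z.1 + z.2))
          * (W z.1 * W z.2) a b := by
    intro s z a b; ring
  have hkey : ∀ (s : ℝ), ∀ z ∈ Ioi (0:ℝ) ×ˢ Ioi (0:ℝ), ∀ (a b : Fin p),
      ((z.1 + z.2)⁻¹ * z.1 ^ i * z.2 ^ j * Real.exp (s * (z.1 + z.2)) * (z.1 + z.2))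
          * (W z.1 * W z.2) a b
      = (z.1 ^ i * z.2 ^ j * Real.exp (s * (z.1 + z.2))) * (W z.1 * W z.2) a b := by
    intro s z hz a b
    have hx : (0:ℝ) < z.1 := hz.1
    have hy : (0:ℝ) < z.2 := hz.2
    have hxy : z.1 + z.2 ≠ 0 := ne_of_gt (add_pos hx hy)
    field_simp
  have hsum : ∀ a b : Fin p,
      (mT W (i + 1) j t + mT W i (j + 1) t) a b
        = ∫ z in Ioi (0:ℝ) ×ˢ Ioi (0:ℝ),
            (z.1 ^ i * z.2 ^ j * Real.exp (t * (z.1 + z.2))) * (W z.1 * W z.2) a b := by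
    intro a b
    have h1 := hmfin (i + 1) j t a b
    have h2 := hmfin i (j + 1) t a b
    simp only [Matrix.add_apply, mT, Matrix.of_apply]
    rw [← integral_add h1 h2]
    refine setIntegral_congr_fun hset fun z hz => ?_
    rw [hsplit t z a b, hkey t z hz a b]
  have hprodeq : (volume : Measure (ℝ × ℝ)).restrict (Ioi (0:ℝ) ×ˢ Ioi (0:ℝ))
      = ((volume : Measure ℝ).restrict (Ioi 0)).prod ((volume : Measure ℝ).restrict (Ioi 0)) := by
    rw [Measure.volume_eq_prod, Measure.prod_restrict]
  refine ⟨fun a b => ?_, ?_⟩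
  · obtain ⟨bound, hbi, hb⟩ := hdom (t - 1) (t + 1)
    have h := hasDerivAt_integral_of_dominated_loc_of_deriv_le
      (μ := (volume : Measure (ℝ × ℝ)).restrict (Ioi (0:ℝ) ×ˢ Ioi (0:ℝ)))
      (F := fun s (z : ℝ × ℝ) =>
        ((z.1 + z.2)⁻¹ * z.1 ^ i * z.2 ^ j * Real.exp (s * (z.1 + z.2))) * (W z.1 * W z.2) a b)
      (F' := fun s (z : ℝ × ℝ) =>
        ((z.1 + z.2)⁻¹ * z.1 ^ i * z.2 ^ j * Real.exp (s * (z.1 + z.2)) * (z.1 + z.2))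
          * (W z.1 * W z.2) a b)
      (bound := fun z => 2 * bound z) (x₀ := t) (Metric.ball_mem_nhds t one_pos)
      (Filter.Eventually.of_forall fun s => (hmfin i j s a b).aestronglyMeasurable)
      (hmfin i j t a b)
      (((hmfin (i + 1) j t a b).aestronglyMeasurable.add
          (hmfin i (j + 1) t a b).aestronglyMeasurable).congr
        (Filter.Eventually.of_forall fun z => hsplit t z a b))
      ?_ (hbi.const_mul 2) ?_
    · have hval : (∫ z in Ioi (0:ℝ) ×ˢ Ioi (0:ℝ),
          ((z.1 + z.2)⁻¹ * z.1 ^ i * z.2 ^ j * Real.exp (t * (z.1 + z.2)) * (z.1 + z.2))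
            * (W z.1 * W z.2) a b)
          = (mT W (i + 1) j t + mT W i (j + 1) t) a b := by
        rw [hsum a b]
        exact setIntegral_congr_fun hset fun z hz => hkey t z hz a b
      rw [← hval]
      simpa only [mT, Matrix.of_apply] using h.2
    · refine Filter.Eventually.mono (ae_restrict_mem hset) fun z hz => ?_
      intro s hs
      have hsI : s ∈ Icc (t - 1) (t + 1) := by
        rw [Metric.mem_ball, Real.dist_eq] at hs
        constructor <;> [linarith [abs_lt.mp hs]; linarith [abs_lt.mp hs]]
      obtain ⟨hb1, hb2⟩ := hb s hsI z hz a b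
      show |((z.1 + z.2)⁻¹ * z.1 ^ i * z.2 ^ j * Real.exp (s * (z.1 + z.2)) * (z.1 + z.2))
          * (W z.1 * W z.2) a b| ≤ 2 * bound z
      rw [← hsplit s z a b]
      calc |((z.1 + z.2)⁻¹ * z.1 ^ (i + 1) * z.2 ^ j * Real.exp (s * (z.1 + z.2)))
              * (W z.1 * W z.2) a b
            + ((z.1 + z.2)⁻¹ * z.1 ^ i * z.2 ^ (j + 1) * Real.exp (s * (z.1 + z.2)))
              * (W z.1 * W z.2) a b|
          ≤ |((z.1 + z.2)⁻¹ * z.1 ^ (i + 1) * z.2 ^ j * Real.exp (s * (z.1 + z.2)))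
              * (W z.1 * W z.2) a b|
            + |((z.1 + z.2)⁻¹ * z.1 ^ i * z.2 ^ (j + 1) * Real.exp (s * (z.1 + z.2)))
              * (W z.1 * W z.2) a b| := abs_add_le _ _
        _ ≤ 2 * bound z := by linarith
    · refine Filter.Eventually.of_forall fun z => ?_
      intro s _
      have h1 : HasDerivAt (fun u : ℝ => u * (z.1 + z.2)) (z.1 + z.2) s := by
        simpa using (hasDerivAt_id s).mul_const (z.1 + z.2)
      have h2 := (Real.hasDerivAt_exp (s * (z.1 + z.2))).comp s h1
      have h3 := (h2.const_mul ((z.1 + z.2)⁻¹ * z.1 ^ i * z.2 ^ j)).mul_const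
        ((W z.1 * W z.2) a b)
      exact h3.congr_deriv (by ring)
  · ext a b
    rw [Matrix.mul_apply, hsum a b]
    have hRc : ∀ c : Fin p, phiT W i t a c * phiT W j t c b
        = ∫ z in Ioi (0:ℝ) ×ˢ Ioi (0:ℝ),
            ((z.1 ^ i * Real.exp (t * z.1)) * W z.1 a c)
              * ((z.2 ^ j * Real.exp (t * z.2)) * W z.2 c b) := by
      intro c
      simp only [phiT, Matrix.of_apply]
      rw [hprodeq]
      exact (MeasureTheory.integral_prod_mul (f := fun x => (x ^ i * Real.exp (t * x)) * W x a c)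
        (g := fun y => (y ^ j * Real.exp (t * y)) * W y c b) ..).symm
    have hintc : ∀ c : Fin p, Integrable (fun z : ℝ × ℝ =>
        ((z.1 ^ i * Real.exp (t * z.1)) * W z.1 a c)
          * ((z.2 ^ j * Real.exp (t * z.2)) * W z.2 c b))
        ((volume : Measure (ℝ × ℝ)).restrict (Ioi (0:ℝ) ×ˢ Ioi (0:ℝ))) := by
      intro c
      rw [hprodeq]
      exact (hphifin i t a c).mul_prod (hphifin j t c b)
    calc (∫ z in Ioi (0:ℝ) ×ˢ Ioi (0:ℝ),
            (z.1 ^ i * z.2 ^ j * Real.exp (t * (z.1 + z.2))) * (W z.1 * W z.2) a b)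
        = ∫ z in Ioi (0:ℝ) ×ˢ Ioi (0:ℝ), ∑ c : Fin p,
            ((z.1 ^ i * Real.exp (t * z.1)) * W z.1 a c)
              * ((z.2 ^ j * Real.exp (t * z.2)) * W z.2 c b) := by
          refine integral_congr_ae (Filter.Eventually.of_forall fun z => ?_)
          show (z.1 ^ i * z.2 ^ j * Real.exp (t * (z.1 + z.2))) * (W z.1 * W z.2) a b
            = ∑ c : Fin p, ((z.1 ^ i * Real.exp (t * z.1)) * W z.1 a c)
                * ((z.2 ^ j * Real.exp (t * z.2)) * W z.2 c b)
          rw [Matrix.mul_apply, Finset.mul_sum]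
          refine Finset.sum_congr rfl fun c _ => ?_
          rw [mul_add t, Real.exp_add]; ring
      _ = ∑ c : Fin p, ∫ z in Ioi (0:ℝ) ×ˢ Ioi (0:ℝ),
            ((z.1 ^ i * Real.exp (t * z.1)) * W z.1 a c)
              * ((z.2 ^ j * Real.exp (t * z.2)) * W z.2 c b) :=
          integral_finset_sum Finset.univ fun c _ => hintc c
      _ = ∑ c : Fin p, phiT W i t a c * phiT W j t c b :=
          Finset.sum_congr rfl fun c _ => (hRc c).symm
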